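/- arXiv:1811.12730 — 16 statements merged into one kernel-verified Lean document; each statement's English description precedes it below -/
import Mathlib

section
/- Let x > 0 be a real number. Define p, q : ℕ → ℝ (the numerators and denominators of the convergents of the continued fraction F(x) = [x, 1/x, x², 1/x², x³, 1/x³, …]) by p 0 = x, q 0 = 1, p 1 = 2, q 1 = 1/x, and for all j ≥ 1: p (j+1) = c (j+1) · p j + p (j−1) and q (j+1) = c (j+1) · q j + q (j−1), where c (2m) = x^(m+1) and c (2m+1) = x^(−(m+1)) for m ≥ 0. Then for every j ≥ 0 one has p j / q j = A j / B j; that is, the continued fractions F(x) and F̃(x) have the same sequence of convergents. -/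
theorem stmt_0 (x : ℝ) (hx : 0 < x)
    (A B p q c : ℕ → ℝ)
    (hA0 : A 0 = x) (hA1 : A 1 = 2 * x) (hB0 : B 0 = 1) (hB1 : B 1 = 1)
    (hAe : ∀ j, 1 ≤ j → Even (j + 1) → A (j + 1) = x * A j + A (j - 1))
    (hAo : ∀ j, 1 ≤ j → Odd (j + 1) → A (j + 1) = A j + x * A (j - 1))
    (hBe : ∀ j, 1 ≤ j → Even (j + 1) → B (j + 1) = x * B j + B (j - 1))
    (hBo : ∀ j, 1 ≤ j → Odd (j + 1) → B (j + 1) = B j + x * B (j - 1))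
    (hce : ∀ m, c (2 * m) = x ^ (m + 1))
    (hco : ∀ m, c (2 * m + 1) = (x ^ (m + 1))⁻¹)
    (hp0 : p 0 = x) (hq0 : q 0 = 1) (hp1 : p 1 = 2) (hq1 : q 1 = 1 / x)
    (hp : ∀ j, 1 ≤ j → p (j + 1) = c (j + 1) * p j + p (j - 1))
    (hq : ∀ j, 1 ≤ j → q (j + 1) = c (j + 1) * q j + q (j - 1)) :
    ∀ j, p j / q j = A j / B j := by
  have hx0 : x ≠ 0 := ne_of_gt hx
  -- main claim: p (2m) = A (2m), q (2m) = B (2m),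
  -- p (2m+1) = (x^(m+1))⁻¹ * A (2m+1), q (2m+1) = (x^(m+1))⁻¹ * B (2m+1)
  have key : ∀ m : ℕ, (p (2*m) = A (2*m) ∧ q (2*m) = B (2*m)) ∧
      (p (2*m+1) = (x^(m+1))⁻¹ * A (2*m+1) ∧ q (2*m+1) = (x^(m+1))⁻¹ * B (2*m+1)) := by
    intro m
    induction m with
    | zero =>
      constructor
      · constructor
        · simpa [hp0] using hA0.symm
        · simpa [hq0] using hB0.symm
      · constructor
        · rw [show 2*0+1 = 1 by norm_num, hp1, hA1]
          field_simp
        · rw [show 2*0+1 = 1 by norm_num, hq1, hB1]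
          field_simp
    | succ m ih =>
      obtain ⟨⟨hpE, hqE⟩, hpO, hqO⟩ := ih
      have h2m : (1:ℕ) ≤ 2*m+1 := by omega
      have hEv : Even (2*m+1+1) := ⟨m+1, by ring⟩
      have hAstep := hAe (2*m+1) h2m hEv
      have hBstep := hBe (2*m+1) h2m hEv
      have hpstep := hp (2*m+1) h2m
      have hqstep := hq (2*m+1) h2m
      have hc2 : c (2*m+1+1) = x^(m+2) := by
        have := hce (m+1); rw [show 2*(m+1) = 2*m+1+1 by ring] at this
        rw [this]
      simp only [show 2*m+1-1 = 2*m by omega] at hpstep hqstep hAstep hBstep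
      have hpE' : p (2*(m+1)) = A (2*(m+1)) := by
        rw [show 2*(m+1) = 2*m+1+1 by ring, hpstep, hc2, hpO, hpE, hAstep]
        field_simp
        ring
      have hqE' : q (2*(m+1)) = B (2*(m+1)) := by
        rw [show 2*(m+1) = 2*m+1+1 by ring, hqstep, hc2, hqO, hqE, hBstep]
        field_simp
        ring
      refine ⟨⟨hpE', hqE'⟩, ?_, ?_⟩
      all_goals {
        have h2m2 : (1:ℕ) ≤ 2*(m+1) := by omega
        have hOd : Odd (2*(m+1)+1) := ⟨m+1, by ring⟩
        have hAstep2 := hAo (2*(m+1)) h2m2 hOd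
        have hBstep2 := hBo (2*(m+1)) h2m2 hOd
        have hpstep2 := hp (2*(m+1)) h2m2
        have hqstep2 := hq (2*(m+1)) h2m2
        have hc3 : c (2*(m+1)+1) = (x^(m+2))⁻¹ := by
          have := hco (m+1); rwa [show m+1+1 = m+2 by ring] at this
        simp only [show 2*(m+1)-1 = 2*m+1 by omega] at hpstep2 hqstep2 hAstep2 hBstep2
        first
        | (rw [hpstep2, hc3, hpE', hpO, hAstep2]; field_simp; ring)
        | (rw [hqstep2, hc3, hqE', hqO, hBstep2]; field_simp; ring)
      }
  intro j
  rcases Nat.even_or_odd j with ⟨m, hm⟩ | ⟨m, hm⟩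
  · have := (key m).1
    rw [show j = 2*m by omega, this.1, this.2]
  · have := (key m).2
    have hr : (x^(m+1))⁻¹ ≠ 0 := by positivity
    rw [show j = 2*m+1 by omega, this.1, this.2, mul_div_mul_left _ _ hr]
end

section
/- For every real number x, in the ring of formal power series ℝ⟦T⟧ one has the generating-function identities (1 − (2x+1)·T + x·T²) · Σ_{j≥0} B (2j+1) · T^j = 1 and (1 − (2x+1)·T + x·T²) · Σ_{j≥0} B (2j) · T^j = 1 − x·T. -/
open PowerSeries

lemma aux_coeff (a b : ℝ) (c : ℕ → ℝ) (n : ℕ) :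
    (coeff n) ((1 - C a * X + C b * X ^ 2) * mk c) =
      (if n = 0 then c 0 else if n = 1 then c 1 - a * c 0
       else c n - a * c (n - 1) + b * c (n - 2)) := by
  rw [add_mul, sub_mul, one_mul, mul_assoc, mul_assoc]
  match n with
  | 0 => simp
  | 1 => simp [coeff_succ_X_mul, coeff_X_pow_mul']
  | (m + 2) =>
    simp only [map_add, map_sub, coeff_C_mul, coeff_mk]
    rw [show m + 2 = (m + 1) + 1 from rfl, coeff_succ_X_mul,
      show m + 1 + 1 = m + 2 from rfl, coeff_X_pow_mul (mk c) 2 m]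
    simp [coeff_mk]

theorem stmt_3 (x : ℝ) (A B : ℕ → ℝ)
    (hA0 : A 0 = x) (hA1 : A 1 = 2 * x)
    (hA2 : A 2 = x * (2 * x + 1)) (hA3 : A 3 = x * (4 * x + 1))
    (hB0 : B 0 = 1) (hB1 : B 1 = 1) (hB2 : B 2 = x + 1) (hB3 : B 3 = 2 * x + 1)
    (hA : ∀ j, A (j + 4) = (2 * x + 1) * A (j + 2) - x * A j)
    (hB : ∀ j, B (j + 4) = (2 * x + 1) * B (j + 2) - x * B j) :
    (1 - (PowerSeries.C : ℝ →+* PowerSeries ℝ) (2 * x + 1) * PowerSeries.X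
        + (PowerSeries.C : ℝ →+* PowerSeries ℝ) x * PowerSeries.X ^ 2) *
      PowerSeries.mk (fun j => B (2 * j + 1)) = 1 ∧
    (1 - (PowerSeries.C : ℝ →+* PowerSeries ℝ) (2 * x + 1) * PowerSeries.X
        + (PowerSeries.C : ℝ →+* PowerSeries ℝ) x * PowerSeries.X ^ 2) *
      PowerSeries.mk (fun j => B (2 * j)) =
        1 - (PowerSeries.C : ℝ →+* PowerSeries ℝ) x * PowerSeries.X := by
  constructor
  · ext n
    rw [aux_coeff]
    match n with
    | 0 => simp [hB1]
    | 1 => simp [hB3, hB1]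
    | (m + 2) =>
      have h := hB (2 * m + 1)
      simp only [coeff_one, if_neg (by omega : ¬ m + 2 = 0), if_neg (by omega : ¬ m + 2 = 1)]
      have e1 : 2 * (m + 2) + 1 = (2 * m + 1) + 4 := by ring
      have e2 : 2 * (m + 2 - 1) + 1 = (2 * m + 1) + 2 := by omega
      have e3 : 2 * (m + 2 - 2) + 1 = 2 * m + 1 := by omega
      rw [e1, e2, e3, h]; ring
  · ext n
    rw [aux_coeff]
    match n with
    | 0 => simp [hB0]
    | 1 => simp [hB2, hB0]; ring
    | (m + 2) =>
      have h := hB (2 * m)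
      have e1 : 2 * (m + 2) = 2 * m + 4 := by ring
      have e2 : 2 * (m + 2 - 1) = 2 * m + 2 := by omega
      have e3 : 2 * (m + 2 - 2) = 2 * m := by omega
      simp only [if_neg (by omega : ¬ m + 2 = 0), if_neg (by omega : ¬ m + 2 = 1),
        map_sub, map_one, coeff_C_mul, coeff_X, if_neg (by omega : ¬ m + 2 = 1),
        coeff_one, if_neg (by omega : ¬ m + 2 = 0)]
      rw [e1, e2, e3, h]; ring
end

section
/- For every real number x the following relations hold: A (2j+1) = 2·A (2j) − A (2j−2) for all j ≥ 1; x·B (2j+1) = A (2j) for all j ≥ 0; x·B (2j) = A (2j) − x·A (2j−2) for all j ≥ 1; and B (2j) = B (2j+1) − x·B (2j−1) for all j ≥ 1. -/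
lemma two_step_zero (x : ℝ) (c : ℕ → ℝ) (h0 : c 0 = 0) (h1 : c 1 = 0)
    (hrec : ∀ j, c (j + 2) = (2 * x + 1) * c (j + 1) - x * c j) : ∀ j, c j = 0 := by
  have key : ∀ j, c j = 0 ∧ c (j + 1) = 0 := by
    intro j
    induction j with
    | zero => exact ⟨h0, h1⟩
    | succ n ih => exact ⟨ih.2, by rw [hrec, ih.1, ih.2]; ring⟩
  exact fun j => (key j).1

theorem stmt_4 (x : ℝ) (A B : ℕ → ℝ)
    (hA0 : A 0 = x) (hA1 : A 1 = 2 * x)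
    (hA2 : A 2 = x * (2 * x + 1)) (hA3 : A 3 = x * (4 * x + 1))
    (hB0 : B 0 = 1) (hB1 : B 1 = 1) (hB2 : B 2 = x + 1) (hB3 : B 3 = 2 * x + 1)
    (hA : ∀ j, A (j + 4) = (2 * x + 1) * A (j + 2) - x * A j)
    (hB : ∀ j, B (j + 4) = (2 * x + 1) * B (j + 2) - x * B j) :
    (∀ j, 1 ≤ j → A (2 * j + 1) = 2 * A (2 * j) - A (2 * j - 2)) ∧
    (∀ j, x * B (2 * j + 1) = A (2 * j)) ∧
    (∀ j, 1 ≤ j → x * B (2 * j) = A (2 * j) - x * A (2 * j - 2)) ∧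
    (∀ j, 1 ≤ j → B (2 * j) = B (2 * j + 1) - x * B (2 * j - 1)) := by
  have hA4 : A 4 = (2 * x + 1) * (x * (2 * x + 1)) - x * x := by
    have := hA 0; rw [hA0, hA2] at this; exact this
  have hA5 : A 5 = (2 * x + 1) * (x * (4 * x + 1)) - x * (2 * x) := by
    have := hA 1; rw [hA1, hA3] at this; exact this
  have hB4 : B 4 = (2 * x + 1) * (x + 1) - x * 1 := by
    have := hB 0; rw [hB0, hB2] at this; exact this
  have hB5 : B 5 = (2 * x + 1) * (2 * x + 1) - x * 1 := by
    have := hB 1; rw [hB1, hB3] at this; exact this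
  -- claim 1
  have c1 : ∀ j, A (2 * j + 3) - 2 * A (2 * j + 2) + A (2 * j) = 0 := by
    apply two_step_zero x (fun j => A (2 * j + 3) - 2 * A (2 * j + 2) + A (2 * j))
    · show A (2 * 0 + 3) - 2 * A (2 * 0 + 2) + A (2 * 0) = 0
      norm_num; rw [hA3, hA2, hA0]; ring
    · show A (2 * 1 + 3) - 2 * A (2 * 1 + 2) + A (2 * 1) = 0
      norm_num; rw [hA5, hA4, hA2]; ring
    · intro j
      show A (2 * (j + 2) + 3) - 2 * A (2 * (j + 2) + 2) + A (2 * (j + 2)) =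
        (2 * x + 1) * (A (2 * (j + 1) + 3) - 2 * A (2 * (j + 1) + 2) + A (2 * (j + 1)))
        - x * (A (2 * j + 3) - 2 * A (2 * j + 2) + A (2 * j))
      have e1 : 2 * (j + 2) + 3 = (2 * j + 3) + 4 := by ring
      have e2 : 2 * (j + 2) + 2 = (2 * j + 2) + 4 := by ring
      have e3 : 2 * (j + 2) = (2 * j) + 4 := by ring
      have e4 : 2 * (j + 1) + 3 = (2 * j + 3) + 2 := by ring
      have e5 : 2 * (j + 1) + 2 = (2 * j + 2) + 2 := by ring
      have e6 : 2 * (j + 1) = (2 * j) + 2 := by ring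
      rw [e1, e2, e3, e4, e5, e6, hA (2 * j + 3), hA (2 * j + 2), hA (2 * j)]
      ring
  -- claim 2
  have c2 : ∀ j, x * B (2 * j + 1) - A (2 * j) = 0 := by
    apply two_step_zero x (fun j => x * B (2 * j + 1) - A (2 * j))
    · show x * B (2 * 0 + 1) - A (2 * 0) = 0
      norm_num; rw [hB1, hA0]; ring
    · show x * B (2 * 1 + 1) - A (2 * 1) = 0
      norm_num; rw [hB3, hA2]; ring
    · intro j
      show x * B (2 * (j + 2) + 1) - A (2 * (j + 2)) =
        (2 * x + 1) * (x * B (2 * (j + 1) + 1) - A (2 * (j + 1)))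
        - x * (x * B (2 * j + 1) - A (2 * j))
      have e1 : 2 * (j + 2) + 1 = (2 * j + 1) + 4 := by ring
      have e2 : 2 * (j + 2) = (2 * j) + 4 := by ring
      have e3 : 2 * (j + 1) + 1 = (2 * j + 1) + 2 := by ring
      have e4 : 2 * (j + 1) = (2 * j) + 2 := by ring
      rw [e1, e2, e3, e4, hB (2 * j + 1), hA (2 * j)]
      ring
  -- claim 3
  have c3 : ∀ j, x * B (2 * j + 2) - A (2 * j + 2) + x * A (2 * j) = 0 := by
    apply two_step_zero x (fun j => x * B (2 * j + 2) - A (2 * j + 2) + x * A (2 * j))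
    · show x * B (2 * 0 + 2) - A (2 * 0 + 2) + x * A (2 * 0) = 0
      norm_num; rw [hB2, hA2, hA0]; ring
    · show x * B (2 * 1 + 2) - A (2 * 1 + 2) + x * A (2 * 1) = 0
      norm_num; rw [hB4, hA4, hA2]; ring
    · intro j
      show x * B (2 * (j + 2) + 2) - A (2 * (j + 2) + 2) + x * A (2 * (j + 2)) =
        (2 * x + 1) * (x * B (2 * (j + 1) + 2) - A (2 * (j + 1) + 2) + x * A (2 * (j + 1)))
        - x * (x * B (2 * j + 2) - A (2 * j + 2) + x * A (2 * j))
      have e1 : 2 * (j + 2) + 2 = (2 * j + 2) + 4 := by ring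
      have e2 : 2 * (j + 2) = (2 * j) + 4 := by ring
      have e3 : 2 * (j + 1) + 2 = (2 * j + 2) + 2 := by ring
      have e4 : 2 * (j + 1) = (2 * j) + 2 := by ring
      rw [e1, e2, e3, e4, hB (2 * j + 2), hA (2 * j + 2), hA (2 * j)]
      ring
  -- claim 4
  have c4 : ∀ j, B (2 * j + 2) - B (2 * j + 3) + x * B (2 * j + 1) = 0 := by
    apply two_step_zero x (fun j => B (2 * j + 2) - B (2 * j + 3) + x * B (2 * j + 1))
    · show B (2 * 0 + 2) - B (2 * 0 + 3) + x * B (2 * 0 + 1) = 0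
      norm_num; rw [hB2, hB3, hB1]; ring
    · show B (2 * 1 + 2) - B (2 * 1 + 3) + x * B (2 * 1 + 1) = 0
      norm_num; rw [hB4, hB5, hB3]; ring
    · intro j
      show B (2 * (j + 2) + 2) - B (2 * (j + 2) + 3) + x * B (2 * (j + 2) + 1) =
        (2 * x + 1) * (B (2 * (j + 1) + 2) - B (2 * (j + 1) + 3) + x * B (2 * (j + 1) + 1))
        - x * (B (2 * j + 2) - B (2 * j + 3) + x * B (2 * j + 1))
      have e1 : 2 * (j + 2) + 2 = (2 * j + 2) + 4 := by ring
      have e2 : 2 * (j + 2) + 3 = (2 * j + 3) + 4 := by ring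
      have e3 : 2 * (j + 2) + 1 = (2 * j + 1) + 4 := by ring
      have e4 : 2 * (j + 1) + 2 = (2 * j + 2) + 2 := by ring
      have e5 : 2 * (j + 1) + 3 = (2 * j + 3) + 2 := by ring
      have e6 : 2 * (j + 1) + 1 = (2 * j + 1) + 2 := by ring
      rw [e1, e2, e3, e4, e5, e6, hB (2 * j + 2), hB (2 * j + 3), hB (2 * j + 1)]
      ring
  refine ⟨?_, ?_, ?_, ?_⟩
  · intro j hj
    obtain ⟨k, rfl⟩ := Nat.exists_eq_add_of_le hj
    have i1 : 2 * (1 + k) + 1 = 2 * k + 3 := by omega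
    have i2 : 2 * (1 + k) = 2 * k + 2 := by omega
    have i3 : 2 * k + 2 - 2 = 2 * k := by omega
    rw [i1, i2, i3]
    have := c1 k; linarith
  · intro j
    have := c2 j; linarith
  · intro j hj
    obtain ⟨k, rfl⟩ := Nat.exists_eq_add_of_le hj
    have i2 : 2 * (1 + k) = 2 * k + 2 := by omega
    have i3 : 2 * k + 2 - 2 = 2 * k := by omega
    rw [i2, i3]
    have := c3 k; linarith
  · intro j hj
    obtain ⟨k, rfl⟩ := Nat.exists_eq_add_of_le hj
    have i1 : 2 * (1 + k) + 1 = 2 * k + 3 := by omega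
    have i2 : 2 * (1 + k) = 2 * k + 2 := by omega
    have i3 : 2 * k + 2 - 1 = 2 * k + 1 := by omega
    rw [i1, i2, i3]
    have := c4 k; linarith
end

section
/- For every real number x and every j ≥ 2, one has 2x·B j = A j + x·B (j−2). -/
theorem stmt_5 (x : ℝ) (A B : ℕ → ℝ)
    (hA0 : A 0 = x) (hA1 : A 1 = 2 * x)
    (hA2 : A 2 = x * (2 * x + 1)) (hA3 : A 3 = x * (4 * x + 1))
    (hB0 : B 0 = 1) (hB1 : B 1 = 1) (hB2 : B 2 = x + 1) (hB3 : B 3 = 2 * x + 1)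
    (hA : ∀ j, A (j + 4) = (2 * x + 1) * A (j + 2) - x * A j)
    (hB : ∀ j, B (j + 4) = (2 * x + 1) * B (j + 2) - x * B j) :
    ∀ j, 2 ≤ j → 2 * x * B j = A j + x * B (j - 2) := by
  have key : ∀ k, B (k + 2) = A k + B k ∧ A (k + 2) = 2 * x * A k + x * B k := by
    intro k
    induction k using Nat.strong_induction_on with
    | _ k ih =>
      match k with
      | 0 => exact ⟨by rw [hB2, hA0, hB0], by rw [hA2, hA0, hB0]; ring⟩
      | 1 => exact ⟨by rw [hB3, hA1, hB1], by rw [hA3, hA1, hB1]; ring⟩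
      | (k + 2) =>
        obtain ⟨h1, h2⟩ := ih k (by omega)
        constructor
        · show B (k + 4) = _
          rw [hB k, h1, h2]; ring
        · show A (k + 4) = _
          rw [hA k, h1, h2]; ring
  intro j hj
  obtain ⟨k, rfl⟩ : ∃ k, j = k + 2 := ⟨j - 2, by omega⟩
  obtain ⟨h1, h2⟩ := key k
  simp only [Nat.add_sub_cancel]
  rw [h1, h2]; ring
end

section
/- For every real number x and every k ≥ 0, the B polynomials are weighted sums of the A polynomials: 2^k·x·B (2k) = A 0 + Σ_{j=1}^{k} 2^{j−1}·A (2j), and 2^{k+1}·x·B (2k+1) = Σ_{j=0}^{k} 2^{j}·A (2j+1). -/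
theorem stmt_6 (x : ℝ) (A B : ℕ → ℝ)
    (hA0 : A 0 = x) (hA1 : A 1 = 2 * x)
    (hA2 : A 2 = x * (2 * x + 1)) (hA3 : A 3 = x * (4 * x + 1))
    (hB0 : B 0 = 1) (hB1 : B 1 = 1) (hB2 : B 2 = x + 1) (hB3 : B 3 = 2 * x + 1)
    (hA : ∀ j, A (j + 4) = (2 * x + 1) * A (j + 2) - x * A j)
    (hB : ∀ j, B (j + 4) = (2 * x + 1) * B (j + 2) - x * B j) :
    ∀ k, 2 ^ k * x * B (2 * k) = A 0 + ∑ j ∈ Finset.Icc 1 k, 2 ^ (j - 1) * A (2 * j) ∧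
      2 ^ (k + 1) * x * B (2 * k + 1) = ∑ j ∈ Finset.range (k + 1), 2 ^ j * A (2 * j + 1) := by
  have key : ∀ n, (A (n + 2) = 2 * x * B (n + 2) - x * B n) ∧
      (A (n + 3) = 2 * x * B (n + 3) - x * B (n + 1)) ∧
      (A (n + 4) = 2 * x * B (n + 4) - x * B (n + 2)) ∧
      (A (n + 5) = 2 * x * B (n + 5) - x * B (n + 3)) := by
    intro n
    induction n with
    | zero =>
      refine ⟨by rw [hA2, hB2, hB0]; ring, by rw [hA3, hB3, hB1]; ring, ?_, ?_⟩
      · rw [hA 0, hB 0, hA2, hA0, hB2, hB0]; ring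
      · rw [hA 1, hB 1, hA3, hA1, hB3, hB1]; ring
    | succ n ih =>
      obtain ⟨h0, h1, h2, h3⟩ := ih
      refine ⟨h1, h2, h3, ?_⟩
      have e1 : n + 1 + 5 = n + 2 + 4 := by omega
      have e0 : n + 1 + 3 = n + 4 := by omega
      rw [e1, e0, hA (n + 2), h2, h0, hB (n + 2), hB n]
      ring
  intro k
  induction k with
  | zero =>
    constructor
    · simp [hB0, hA0]
    · simp [hB1, hA1]
  | succ k ih =>
    obtain ⟨ih1, ih2⟩ := ih
    have k1 := (key (2 * k)).1
    have k2 := (key (2 * k)).2.1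
    have e1 : 2 * (k + 1) = 2 * k + 2 := by ring
    have e2 : 2 * (k + 1) + 1 = 2 * k + 3 := by ring
    constructor
    · rw [Finset.sum_Icc_succ_top (by omega : 1 ≤ k + 1), e1, k1]
      simp only [Nat.add_sub_cancel]
      linear_combination ih1
    · rw [Finset.sum_range_succ, e2, k2]
      linear_combination ih2
end

section
/- For every real number x and every j ≥ 1, one has A (2j−2)·A (2j+2) − A (2j)² = −x^(j+2) and B (2j−2)·B (2j+2) − B (2j)² = x^(j+1). -/
theorem stmt_7 (x : ℝ) (A B : ℕ → ℝ)
    (hA0 : A 0 = x) (hA1 : A 1 = 2 * x)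
    (hA2 : A 2 = x * (2 * x + 1)) (hA3 : A 3 = x * (4 * x + 1))
    (hB0 : B 0 = 1) (hB1 : B 1 = 1) (hB2 : B 2 = x + 1) (hB3 : B 3 = 2 * x + 1)
    (hA : ∀ j, A (j + 4) = (2 * x + 1) * A (j + 2) - x * A j)
    (hB : ∀ j, B (j + 4) = (2 * x + 1) * B (j + 2) - x * B j) :
    ∀ j, 1 ≤ j →
      A (2 * j - 2) * A (2 * j + 2) - A (2 * j) ^ 2 = -x ^ (j + 2) ∧
      B (2 * j - 2) * B (2 * j + 2) - B (2 * j) ^ 2 = x ^ (j + 1) := by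
  intro j hj
  induction j, hj using Nat.le_induction with
  | base =>
    norm_num
    have h4 := hA 0
    have h4' := hB 0
    rw [hA0, hA2] at h4
    rw [hB0, hB2] at h4'
    constructor
    · rw [hA0, hA2, h4]; ring
    · rw [hB0, hB2, h4']; ring
  | succ n hn ih =>
    obtain ⟨k, rfl⟩ := Nat.exists_eq_add_of_le hn
    obtain ⟨ih1, ih2⟩ := ih
    have e1 : 2 * (1 + k) - 2 = 2 * k := by omega
    have e2 : 2 * (1 + k) = 2 * k + 2 := by omega
    have e3 : 2 * (1 + k) + 2 = 2 * k + 4 := by omega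
    have e4 : 2 * (1 + k + 1) - 2 = 2 * k + 2 := by omega
    have e5 : 2 * (1 + k + 1) = 2 * k + 4 := by omega
    have e6 : 2 * (1 + k + 1) + 2 = 2 * k + 6 := by omega
    rw [e1, e3, e2] at ih1 ih2
    rw [e4, e6, e5]
    have rA1 : A (2 * k + 4) = (2 * x + 1) * A (2 * k + 2) - x * A (2 * k) := hA (2 * k)
    have rA2 : A (2 * k + 6) = (2 * x + 1) * A (2 * k + 4) - x * A (2 * k + 2) := hA (2 * k + 2)
    have rB1 : B (2 * k + 4) = (2 * x + 1) * B (2 * k + 2) - x * B (2 * k) := hB (2 * k)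
    have rB2 : B (2 * k + 6) = (2 * x + 1) * B (2 * k + 4) - x * B (2 * k + 2) := hB (2 * k + 2)
    constructor
    · rw [rA2]
      have hx : -x ^ (1 + k + 1 + 2) = x * -x ^ (1 + k + 2) := by ring
      rw [hx, ← ih1]
      linear_combination (-A (2 * k + 4)) * rA1
    · rw [rB2]
      have hx : x ^ (1 + k + 1 + 1) = x * x ^ (1 + k + 1) := by ring
      rw [hx, ← ih2]
      linear_combination (-B (2 * k + 4)) * rB1
end

section
/- For every real number x and every j ≥ 2, one has A (2j−3)·A (2j+1) − A (2j−1)² = x^j and B (2j−3)·B (2j+1) − B (2j−1)² = −x^(j−1). -/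
theorem stmt_8 (x : ℝ) (A B : ℕ → ℝ)
    (hA0 : A 0 = x) (hA1 : A 1 = 2 * x)
    (hA2 : A 2 = x * (2 * x + 1)) (hA3 : A 3 = x * (4 * x + 1))
    (hB0 : B 0 = 1) (hB1 : B 1 = 1) (hB2 : B 2 = x + 1) (hB3 : B 3 = 2 * x + 1)
    (hA : ∀ j, A (j + 4) = (2 * x + 1) * A (j + 2) - x * A j)
    (hB : ∀ j, B (j + 4) = (2 * x + 1) * B (j + 2) - x * B j) :
    ∀ j, 2 ≤ j →
      A (2 * j - 3) * A (2 * j + 1) - A (2 * j - 1) ^ 2 = x ^ j ∧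
      B (2 * j - 3) * B (2 * j + 1) - B (2 * j - 1) ^ 2 = -x ^ (j - 1) := by
  have key : ∀ k, A (2*k+1) * A (2*k+5) - A (2*k+3)^2 = x^(k+2) ∧
      B (2*k+1) * B (2*k+5) - B (2*k+3)^2 = -x^(k+1) := by
    intro k
    induction k with
    | zero =>
      have h5A : A 5 = (2*x+1) * A 3 - x * A 1 := hA 1
      have h5B : B 5 = (2*x+1) * B 3 - x * B 1 := hB 1
      constructor
      · simp only [show (2*0+1 : ℕ) = 1 from rfl, show (2*0+5 : ℕ) = 5 from rfl,
          show (2*0+3 : ℕ) = 3 from rfl]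
        rw [h5A, hA1, hA3]; ring
      · simp only [show (2*0+1 : ℕ) = 1 from rfl, show (2*0+5 : ℕ) = 5 from rfl,
          show (2*0+3 : ℕ) = 3 from rfl]
        rw [h5B, hB1, hB3]; ring
    | succ n ih =>
      have e7 : 2*n+3+4 = 2*n+7 := by omega
      have e5a : 2*n+3+2 = 2*n+5 := by omega
      have e5b : 2*n+1+4 = 2*n+5 := by omega
      have e3 : 2*n+1+2 = 2*n+3 := by omega
      have h7A : A (2*n+7) = (2*x+1) * A (2*n+5) - x * A (2*n+3) := by
        have := hA (2*n+3); rw [e7, e5a] at this; exact this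
      have h5A : A (2*n+5) = (2*x+1) * A (2*n+3) - x * A (2*n+1) := by
        have := hA (2*n+1); rw [e5b, e3] at this; exact this
      have h7B : B (2*n+7) = (2*x+1) * B (2*n+5) - x * B (2*n+3) := by
        have := hB (2*n+3); rw [e7, e5a] at this; exact this
      have h5B : B (2*n+5) = (2*x+1) * B (2*n+3) - x * B (2*n+1) := by
        have := hB (2*n+1); rw [e5b, e3] at this; exact this
      have i1 : 2*(n+1)+1 = 2*n+3 := by omega
      have i2 : 2*(n+1)+5 = 2*n+7 := by omega
      have i3 : 2*(n+1)+3 = 2*n+5 := by omega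
      rw [i1, i2, i3]
      constructor
      · rw [h7A]
        linear_combination x * ih.1 - A (2*n+5) * h5A
      · rw [h7B]
        linear_combination x * ih.2 - B (2*n+5) * h5B
  intro j hj
  obtain ⟨k, rfl⟩ : ∃ k, j = k + 2 := ⟨j - 2, by omega⟩
  have e1 : 2*(k+2)-3 = 2*k+1 := by omega
  have e2 : 2*(k+2)+1 = 2*k+5 := by omega
  have e3 : 2*(k+2)-1 = 2*k+3 := by omega
  have e4 : (k+2)-1 = k+1 := by omega
  rw [e1, e2, e3, e4]
  exact key k
end

section
/- For every real number x and every j ≥ 0, one has A (2j)² − (2x−1)·A (2j)·B (2j) − x·B (2j)² = −x^(j+2). -/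
theorem stmt_9 (x : ℝ) (A B : ℕ → ℝ)
    (hA0 : A 0 = x) (hA1 : A 1 = 2 * x)
    (hA2 : A 2 = x * (2 * x + 1)) (hA3 : A 3 = x * (4 * x + 1))
    (hB0 : B 0 = 1) (hB1 : B 1 = 1) (hB2 : B 2 = x + 1) (hB3 : B 3 = 2 * x + 1)
    (hA : ∀ j, A (j + 4) = (2 * x + 1) * A (j + 2) - x * A j)
    (hB : ∀ j, B (j + 4) = (2 * x + 1) * B (j + 2) - x * B j) :
    ∀ j, A (2 * j) ^ 2 - (2 * x - 1) * A (2 * j) * B (2 * j) - x * B (2 * j) ^ 2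
      = -x ^ (j + 2) := by
  suffices h : ∀ j,
      (A (2 * j) ^ 2 - (2 * x - 1) * A (2 * j) * B (2 * j) - x * B (2 * j) ^ 2
        = -x ^ (j + 2)) ∧
      (A (2 * j + 2) ^ 2 - (2 * x - 1) * A (2 * j + 2) * B (2 * j + 2)
        - x * B (2 * j + 2) ^ 2 = -x ^ (j + 3)) ∧
      (2 * A (2 * j + 2) * A (2 * j)
        - (2 * x - 1) * (A (2 * j + 2) * B (2 * j) + A (2 * j) * B (2 * j + 2))
        - 2 * x * B (2 * j + 2) * B (2 * j) = -(2 * x + 1) * x ^ (j + 2)) by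
    intro j; exact (h j).1
  intro j
  induction j with
  | zero =>
    norm_num
    rw [hA0, hA2, hB0, hB2]
    refine ⟨by ring, by ring, by ring⟩
  | succ n ih =>
    obtain ⟨h1, h2, h3⟩ := ih
    have e1 : 2 * (n + 1) = 2 * n + 2 := by ring
    have e2 : 2 * (n + 1) + 2 = 2 * n + 4 := by ring
    rw [e1, show 2 * n + 2 + 2 = 2 * n + 4 from by ring, hA (2 * n), hB (2 * n)]
    refine ⟨by linear_combination h2, ?_, ?_⟩
    · linear_combination (2 * x + 1) ^ 2 * h2 + x ^ 2 * h1 - x * (2 * x + 1) * h3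
    · linear_combination 2 * (2 * x + 1) * h2 - x * h3
end

section
/- For every real number x and every j ≥ 1, one has A (2j−1)² − (2x−1)·A (2j−1)·B (2j−1) − x·B (2j−1)² = x^j. -/
theorem stmt_10 (x : ℝ) (A B : ℕ → ℝ)
    (hA0 : A 0 = x) (hA1 : A 1 = 2 * x)
    (hA2 : A 2 = x * (2 * x + 1)) (hA3 : A 3 = x * (4 * x + 1))
    (hB0 : B 0 = 1) (hB1 : B 1 = 1) (hB2 : B 2 = x + 1) (hB3 : B 3 = 2 * x + 1)
    (hA : ∀ j, A (j + 4) = (2 * x + 1) * A (j + 2) - x * A j)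
    (hB : ∀ j, B (j + 4) = (2 * x + 1) * B (j + 2) - x * B j) :
    ∀ j, 1 ≤ j →
      A (2 * j - 1) ^ 2 - (2 * x - 1) * A (2 * j - 1) * B (2 * j - 1)
        - x * B (2 * j - 1) ^ 2 = x ^ j := by
  have step : ∀ j, A (2 * j + 3) = 2 * x * A (2 * j + 1) + x * B (2 * j + 1) ∧
      B (2 * j + 3) = A (2 * j + 1) + B (2 * j + 1) := by
    intro j
    induction j with
    | zero => simp only [Nat.mul_zero, Nat.zero_add]; rw [hA3, hB3, hA1, hB1]; constructor <;> ring
    | succ k ih =>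
      obtain ⟨iha, ihb⟩ := ih
      have e1 : 2 * (k + 1) + 3 = (2 * k + 1) + 4 := by ring
      have e2 : 2 * (k + 1) + 1 = 2 * k + 3 := by ring
      rw [e1, e2, hA (2 * k + 1), hB (2 * k + 1), iha, ihb]
      constructor <;> ring
  have main : ∀ j, A (2 * j + 1) ^ 2 - (2 * x - 1) * A (2 * j + 1) * B (2 * j + 1)
      - x * B (2 * j + 1) ^ 2 = x ^ (j + 1) := by
    intro j
    induction j with
    | zero => simp only [Nat.mul_zero, Nat.zero_add]; rw [hA1, hB1]; ring
    | succ k ih =>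
      have e2 : 2 * (k + 1) + 1 = 2 * k + 3 := by ring
      obtain ⟨ha, hb⟩ := step k
      rw [e2, ha, hb]
      linear_combination x * ih
  intro j hj
  obtain ⟨k, rfl⟩ := Nat.exists_eq_add_of_le hj
  have e : 2 * (1 + k) - 1 = 2 * k + 1 := by omega
  rw [e, main k]
  ring
end

section
/- Let x > 0 be a real number and set P(x,z) = z² − (2x−1)·z − x. Then B j > 0 for every j ≥ 0, and for every k ≥ 1 the odd convergent F_k(x) = A (2k−1) / B (2k−1) satisfies P(x, F_k(x)) = x^k / B (2k−1)². -/
theorem stmt_11 (x : ℝ) (hx : 0 < x) (A B : ℕ → ℝ)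
    (hA0 : A 0 = x) (hA1 : A 1 = 2 * x)
    (hA2 : A 2 = x * (2 * x + 1)) (hA3 : A 3 = x * (4 * x + 1))
    (hB0 : B 0 = 1) (hB1 : B 1 = 1) (hB2 : B 2 = x + 1) (hB3 : B 3 = 2 * x + 1)
    (hA : ∀ j, A (j + 4) = (2 * x + 1) * A (j + 2) - x * A j)
    (hB : ∀ j, B (j + 4) = (2 * x + 1) * B (j + 2) - x * B j) :
    (∀ j, 0 < B j) ∧
    (∀ k, 1 ≤ k →
      (A (2 * k - 1) / B (2 * k - 1)) ^ 2
        - (2 * x - 1) * (A (2 * k - 1) / B (2 * k - 1)) - x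
      = x ^ k / B (2 * k - 1) ^ 2) := by
  have hBpos : ∀ j, 0 < B j ∧ B j ≤ B (j + 2) := by
    intro j
    induction j using Nat.strong_induction_on with
    | _ j ih =>
      match j with
      | 0 => rw [hB0, hB2]; constructor <;> linarith
      | 1 => rw [hB1, hB3]; constructor <;> linarith
      | (j + 2) =>
        obtain ⟨h1, h2⟩ := ih j (by omega)
        have hrec := hB j
        constructor
        · linarith
        · nlinarith [hrec]
  have main : ∀ m,
      (A (2*m+1)^2 - (2*x-1)*A (2*m+1)*B (2*m+1) - x*B (2*m+1)^2 = x^(m+1)) ∧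
      (A (2*m+3)^2 - (2*x-1)*A (2*m+3)*B (2*m+3) - x*B (2*m+3)^2 = x^(m+2)) ∧
      (2*A (2*m+3)*A (2*m+1) - (2*x-1)*(A (2*m+3)*B (2*m+1) + A (2*m+1)*B (2*m+3))
        - 2*x*B (2*m+3)*B (2*m+1) = x^(m+1)*(2*x+1)) := by
    intro m
    induction m with
    | zero =>
      norm_num [hA1, hA3, hB1, hB3]
      refine ⟨by ring, by ring, by ring⟩
    | succ m ih =>
      obtain ⟨hQ, hQ', hR⟩ := ih
      have e1 : 2*(m+1)+1 = 2*m+3 := by omega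
      have e2 : 2*(m+1)+3 = 2*m+1+4 := by omega
      rw [e1, e2, hA (2*m+1), hB (2*m+1)]
      refine ⟨hQ', ?_, ?_⟩
      · have ep : x^(m+1+2) = x^2 * x^(m+1) := by ring
        rw [ep]
        linear_combination (2*x+1)^2 * hQ' - x*(2*x+1) * hR + x^2 * hQ
      · have ep : x^(m+1+1)*(2*x+1) = x * (x^(m+1)*(2*x+1)) + (2*x+1) * x^(m+2)
            - x * x^(m+1) * (2*x+1) := by ring
        rw [ep]
        linear_combination 2*(2*x+1) * hQ' - x * hR
  refine ⟨fun j => (hBpos j).1, fun k hk => ?_⟩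
  obtain ⟨m, rfl⟩ : ∃ m, k = m + 1 := ⟨k - 1, by omega⟩
  have eidx : 2 * (m + 1) - 1 = 2*m+1 := by omega
  rw [eidx]
  have hb : 0 < B (2*m+1) := (hBpos (2*m+1)).1
  have hQ := (main m).1
  field_simp
  linear_combination hQ
end

section
/- Let x > 0 be a real number and set P(x,z) = z² − (2x−1)·z − x. Then B j > 0 for every j ≥ 0, and for every k ≥ 0 the even convergent F*_k(x) = A (2k) / B (2k) satisfies P(x, F*_k(x)) = −x^(k+2) / B (2k)². -/
theorem stmt_12 (x : ℝ) (hx : 0 < x) (A B : ℕ → ℝ)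
    (hA0 : A 0 = x) (hA1 : A 1 = 2 * x)
    (hA2 : A 2 = x * (2 * x + 1)) (hA3 : A 3 = x * (4 * x + 1))
    (hB0 : B 0 = 1) (hB1 : B 1 = 1) (hB2 : B 2 = x + 1) (hB3 : B 3 = 2 * x + 1)
    (hA : ∀ j, A (j + 4) = (2 * x + 1) * A (j + 2) - x * A j)
    (hB : ∀ j, B (j + 4) = (2 * x + 1) * B (j + 2) - x * B j) :
    (∀ j, 0 < B j) ∧
    (∀ k, (A (2 * k) / B (2 * k)) ^ 2
        - (2 * x - 1) * (A (2 * k) / B (2 * k)) - x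
      = -x ^ (k + 2) / B (2 * k) ^ 2) := by
  -- The first-order system
  have hsys : ∀ j, A (j + 2) = 2 * x * A j + x * B j ∧ B (j + 2) = A j + B j := by
    intro j
    induction j using Nat.strong_induction_on with
    | _ j ih =>
      match j with
      | 0 => rw [hA2, hB2, hA0, hB0]; constructor <;> ring
      | 1 => rw [hA3, hB3, hA1, hB1]; constructor <;> ring
      | (n + 2) =>
        obtain ⟨ihA, ihB⟩ := ih n (by omega)
        constructor
        · have := hA n
          rw [show n + 2 + 2 = n + 4 from rfl, this, ihA, ihB]; ring
        · have := hB n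
          rw [show n + 2 + 2 = n + 4 from rfl, this, ihA, ihB]; ring
  -- positivity
  have hpos : ∀ j, 0 < A j ∧ 0 < B j := by
    intro j
    induction j using Nat.strong_induction_on with
    | _ j ih =>
      match j with
      | 0 => rw [hA0, hB0]; constructor <;> positivity
      | 1 => rw [hA1, hB1]; constructor <;> positivity
      | (n + 2) =>
        obtain ⟨pA, pB⟩ := ih n (by omega)
        obtain ⟨eA, eB⟩ := hsys n
        rw [eA, eB]
        constructor <;> positivity
  refine ⟨fun j => (hpos j).2, ?_⟩
  have key : ∀ k, A (2 * k) ^ 2 - (2 * x - 1) * A (2 * k) * B (2 * k)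
      - x * B (2 * k) ^ 2 = -x ^ (k + 2) := by
    intro k
    induction k with
    | zero => rw [hA0, hB0]; ring
    | succ n ih =>
      obtain ⟨eA, eB⟩ := hsys (2 * n)
      rw [show 2 * (n + 1) = 2 * n + 2 from by ring, eA, eB]
      calc (2 * x * A (2 * n) + x * B (2 * n)) ^ 2
            - (2 * x - 1) * (2 * x * A (2 * n) + x * B (2 * n))
              * (A (2 * n) + B (2 * n))
            - x * (A (2 * n) + B (2 * n)) ^ 2
          = x * (A (2 * n) ^ 2 - (2 * x - 1) * A (2 * n) * B (2 * n)
              - x * B (2 * n) ^ 2) := by ring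
        _ = -x ^ (n + 1 + 2) := by rw [ih]; ring
  intro k
  have hb : B (2 * k) ≠ 0 := ne_of_gt (hpos (2 * k)).2
  field_simp
  linear_combination key k
end

section
/- Let x be a positive integer, regarded as a real number. Then the sequence of odd convergents k ↦ A (2k+1) / B (2k+1) converges (as k → ∞) to z₁ = (2x − 1 + √(4x² + 1))/2, the positive root of the quadratic P(x,z) = z² − (2x−1)·z − x; moreover z₁ is irrational. -/
set_option maxHeartbeats 1000000 in
theorem stmt_13 (n : ℕ) (hn : 0 < n) (x : ℝ) (hxn : x = (n : ℝ)) (A B : ℕ → ℝ)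
    (hA0 : A 0 = x) (hA1 : A 1 = 2 * x)
    (hA2 : A 2 = x * (2 * x + 1)) (hA3 : A 3 = x * (4 * x + 1))
    (hB0 : B 0 = 1) (hB1 : B 1 = 1) (hB2 : B 2 = x + 1) (hB3 : B 3 = 2 * x + 1)
    (hA : ∀ j, A (j + 4) = (2 * x + 1) * A (j + 2) - x * A j)
    (hB : ∀ j, B (j + 4) = (2 * x + 1) * B (j + 2) - x * B j) :
    Filter.Tendsto (fun k => A (2 * k + 1) / B (2 * k + 1)) Filter.atTop
      (nhds ((2 * x - 1 + Real.sqrt (4 * x ^ 2 + 1)) / 2)) ∧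
    ((2 * x - 1 + Real.sqrt (4 * x ^ 2 + 1)) / 2) ^ 2
      - (2 * x - 1) * ((2 * x - 1 + Real.sqrt (4 * x ^ 2 + 1)) / 2) - x = 0 ∧
    0 < (2 * x - 1 + Real.sqrt (4 * x ^ 2 + 1)) / 2 ∧
    Irrational ((2 * x - 1 + Real.sqrt (4 * x ^ 2 + 1)) / 2) := by
  have hx1 : (1 : ℝ) ≤ x := by
    rw [hxn]; exact_mod_cast hn
  set D : ℝ := Real.sqrt (4 * x ^ 2 + 1) with hDdef
  have hD2 : D ^ 2 = 4 * x ^ 2 + 1 := Real.sq_sqrt (by positivity)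
  have hDpos : 0 < D := Real.sqrt_pos.mpr (by positivity)
  have hDlt : D < 2 * x + 1 := by nlinarith
  have hDgt : 1 ≤ D := by nlinarith
  set r : ℝ := (2 * x + 1 + D) / 2 with hrdef
  set s : ℝ := (2 * x + 1 - D) / 2 with hsdef
  set z : ℝ := (2 * x - 1 + D) / 2 with hzdef
  have hspos : 0 < s := by rw [hsdef]; linarith
  have hsr : s < r := by rw [hsdef, hrdef]; linarith
  have hrpos : 0 < r := lt_trans hspos hsr
  have hrms : r - s = D := by rw [hrdef, hsdef]; ring
  have hr2 : r ^ 2 = (2 * x + 1) * r - x := by rw [hrdef]; nlinarith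
  have hs2 : s ^ 2 = (2 * x + 1) * s - x := by rw [hsdef]; nlinarith
  have hrk : ∀ m : ℕ, r ^ (m + 2) = (2 * x + 1) * r ^ (m + 1) - x * r ^ m := by
    intro m
    calc r ^ (m + 2) = r ^ m * r ^ 2 := by ring
    _ = r ^ m * ((2 * x + 1) * r - x) := by rw [hr2]
    _ = (2 * x + 1) * r ^ (m + 1) - x * r ^ m := by ring
  have hsk : ∀ m : ℕ, s ^ (m + 2) = (2 * x + 1) * s ^ (m + 1) - x * s ^ m := by
    intro m
    calc s ^ (m + 2) = s ^ m * s ^ 2 := by ring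
    _ = s ^ m * ((2 * x + 1) * s - x) := by rw [hs2]
    _ = (2 * x + 1) * s ^ (m + 1) - x * s ^ m := by ring
  have hDne : D ≠ 0 := ne_of_gt hDpos
  -- closed forms for the odd-index subsequences, carrying two consecutive values
  have key : ∀ k : ℕ,
      (A (2 * k + 1) = z * ((r ^ (k + 1) - s ^ (k + 1)) / D) + s ^ (k + 1) ∧
        B (2 * k + 1) = (r ^ (k + 1) - s ^ (k + 1)) / D) ∧
      (A (2 * k + 3) = z * ((r ^ (k + 2) - s ^ (k + 2)) / D) + s ^ (k + 2) ∧
        B (2 * k + 3) = (r ^ (k + 2) - s ^ (k + 2)) / D) := by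
    intro k
    induction k with
    | zero =>
      refine ⟨⟨?_, ?_⟩, ?_, ?_⟩
      · rw [hA1]
        have : (r ^ (0 + 1) - s ^ (0 + 1)) / D = 1 := by
          rw [pow_one, pow_one, hrms, div_self hDne]
        rw [this, mul_one, hzdef, hsdef]; ring
      · rw [hB1, pow_one, pow_one, hrms, div_self hDne]
      · rw [hA3]
        have h1 : r ^ (0 + 2) - s ^ (0 + 2) = (2 * x + 1) * D := by
          have : r ^ 2 - s ^ 2 = (r + s) * (r - s) := by ring
          rw [show (0:ℕ)+2 = 2 from rfl, this, hrms, hrdef, hsdef]; ring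
        rw [h1, mul_div_assoc, div_self hDne, mul_one, hzdef, hsdef]
        nlinarith
      · rw [hB3]
        have h1 : r ^ (0 + 2) - s ^ (0 + 2) = (2 * x + 1) * D := by
          have : r ^ 2 - s ^ 2 = (r + s) * (r - s) := by ring
          rw [show (0:ℕ)+2 = 2 from rfl, this, hrms, hrdef, hsdef]; ring
        rw [h1, mul_div_assoc, div_self hDne, mul_one]
    | succ k ih =>
      obtain ⟨⟨hA1', hB1'⟩, hA2', hB2'⟩ := ih
      have e1 : 2 * (k + 1) + 1 = 2 * k + 3 := by ring
      have e2 : 2 * (k + 1) + 3 = (2 * k + 1) + 4 := by ring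
      refine ⟨⟨?_, ?_⟩, ?_, ?_⟩
      · rw [e1, hA2']
      · rw [e1, hB2']
      · rw [e2, hA (2 * k + 1), hA2', hA1']
        rw [show k + 1 + 2 = (k + 1) + 2 from rfl, hrk (k+1), hsk (k+1)]
        ring
      · rw [e2, hB (2 * k + 1), hB2', hB1']
        rw [hrk (k+1), hsk (k+1)]
        ring
  have hBform : ∀ k : ℕ, B (2 * k + 1) = (r ^ (k + 1) - s ^ (k + 1)) / D :=
    fun k => (key k).1.2
  have hAform : ∀ k : ℕ,
      A (2 * k + 1) = z * ((r ^ (k + 1) - s ^ (k + 1)) / D) + s ^ (k + 1) :=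
    fun k => (key k).1.1
  have hpowlt : ∀ k : ℕ, s ^ (k + 1) < r ^ (k + 1) := fun k =>
    pow_lt_pow_left₀ hsr (le_of_lt hspos) (Nat.succ_ne_zero k)
  have hBpos : ∀ k : ℕ, 0 < B (2 * k + 1) := by
    intro k
    rw [hBform k]
    exact div_pos (by linarith [hpowlt k]) hDpos
  have hq : 1 < r / s := (one_lt_div hspos).mpr hsr
  -- the ratio equals z + D / ((r/s)^(k+1) - 1)
  have hratio : ∀ k : ℕ,
      A (2 * k + 1) / B (2 * k + 1) = z + D / ((r / s) ^ (k + 1) - 1) := by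
    intro k
    have hBne : B (2 * k + 1) ≠ 0 := ne_of_gt (hBpos k)
    have hden : (r / s) ^ (k + 1) - 1 = (r ^ (k + 1) - s ^ (k + 1)) / s ^ (k + 1) := by
      field_simp
      rw [sub_mul, div_pow, div_mul_cancel₀ _ (pow_ne_zero _ (ne_of_gt hspos)), one_mul]
    rw [hAform k, hBform k, hden]
    have h1 : r ^ (k + 1) - s ^ (k + 1) ≠ 0 := by linarith [hpowlt k]
    have h2 : s ^ (k + 1) ≠ 0 := ne_of_gt (pow_pos hspos _)
    field_simp
  have hlim : Filter.Tendsto (fun k : ℕ => z + D / ((r / s) ^ (k + 1) - 1))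
      Filter.atTop (nhds z) := by
    have h1 : Filter.Tendsto (fun k : ℕ => (r / s) ^ (k + 1)) Filter.atTop Filter.atTop := by
      exact (tendsto_pow_atTop_atTop_of_one_lt hq).comp (Filter.tendsto_add_atTop_nat 1)
    have h2 : Filter.Tendsto (fun k : ℕ => (r / s) ^ (k + 1) - 1) Filter.atTop Filter.atTop := by
      simpa [sub_eq_add_neg] using Filter.tendsto_atTop_add_const_right Filter.atTop (-1) h1
    have h3 : Filter.Tendsto (fun k : ℕ => D / ((r / s) ^ (k + 1) - 1))
        Filter.atTop (nhds 0) := Filter.Tendsto.div_atTop tendsto_const_nhds h2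
    simpa using (tendsto_const_nhds : Filter.Tendsto (fun _ : ℕ => z) Filter.atTop (nhds z)).add h3
  refine ⟨?_, by rw [hzdef]; nlinarith, by rw [hzdef]; linarith, ?_⟩
  · exact hlim.congr (fun k => (hratio k).symm)
  · have hsq : ¬ IsSquare (4 * n ^ 2 + 1) := by
      rintro ⟨m, hm⟩
      have h1 : 2 * n < m := by nlinarith
      have h2 : m < 2 * n + 1 := by nlinarith
      omega
    have hirr : Irrational D := by
      have : D = Real.sqrt ((4 * n ^ 2 + 1 : ℕ) : ℝ) := by
        rw [hDdef, hxn]; norm_num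
      rw [this]
      exact irrational_sqrt_natCast_iff.mpr hsq
    have h1 : Irrational (2 * x - 1 + D) := by
      have : (2 * x - 1 : ℝ) = ((2 * n - 1 : ℤ) : ℝ) := by
        rw [hxn]; push_cast [hn]; ring
      rw [this]
      exact hirr.intCast_add _
    exact h1.div_intCast (by norm_num)
end

section
/- Let x be a positive integer, regarded as a real number. Then the sequence of even convergents k ↦ A (2k) / B (2k) converges (as k → ∞) to z₁ = (2x − 1 + √(4x² + 1))/2, the positive root of the quadratic P(x,z) = z² − (2x−1)·z − x. -/
theorem stmt_14 (n : ℕ) (hn : 0 < n) (x : ℝ) (hxn : x = (n : ℝ)) (A B : ℕ → ℝ)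
    (hA0 : A 0 = x) (hA1 : A 1 = 2 * x)
    (hA2 : A 2 = x * (2 * x + 1)) (hA3 : A 3 = x * (4 * x + 1))
    (hB0 : B 0 = 1) (hB1 : B 1 = 1) (hB2 : B 2 = x + 1) (hB3 : B 3 = 2 * x + 1)
    (hA : ∀ j, A (j + 4) = (2 * x + 1) * A (j + 2) - x * A j)
    (hB : ∀ j, B (j + 4) = (2 * x + 1) * B (j + 2) - x * B j) :
    Filter.Tendsto (fun k => A (2 * k) / B (2 * k)) Filter.atTop
      (nhds ((2 * x - 1 + Real.sqrt (4 * x ^ 2 + 1)) / 2)) ∧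
    ((2 * x - 1 + Real.sqrt (4 * x ^ 2 + 1)) / 2) ^ 2
      - (2 * x - 1) * ((2 * x - 1 + Real.sqrt (4 * x ^ 2 + 1)) / 2) - x = 0 ∧
    0 < (2 * x - 1 + Real.sqrt (4 * x ^ 2 + 1)) / 2 := by
  have hx1 : (1:ℝ) ≤ x := by rw [hxn]; exact_mod_cast hn
  set d := Real.sqrt (4 * x ^ 2 + 1) with hd
  have hd2 : d ^ 2 = 4 * x ^ 2 + 1 := Real.sq_sqrt (by positivity)
  have hdpos : 0 < d := Real.sqrt_pos.2 (by positivity)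
  have hdgt : 2 * x < d := by nlinarith
  have hdlt : d < 2 * x + 1 := by nlinarith
  obtain ⟨r, hrdef⟩ : ∃ r : ℝ, r = (2*x+1+d)/2 := ⟨_, rfl⟩
  obtain ⟨s, hsdef⟩ : ∃ s : ℝ, s = (2*x+1-d)/2 := ⟨_, rfl⟩
  have hspos : 0 < s := by rw [hsdef]; linarith
  have hslt1 : s < 1 := by rw [hsdef]; linarith
  have hrgt1 : 1 < r := by rw [hrdef]; linarith
  have hrpos : 0 < r := by linarith
  have hsltr : s < r := by rw [hrdef, hsdef]; linarith
  have hsum : r + s = 2*x+1 := by rw [hrdef, hsdef]; ring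
  have hrs : r * s = x := by rw [hrdef, hsdef]; linear_combination (-(1:ℝ)/4) * hd2
  have hrx1 : x + 1 < r := by rw [hrdef]; linarith
  have key : ∀ k : ℕ,
      (A (2*k) * (r-s) = x*r^(k+1) - x*s^(k+1) ∧
       A (2*k+2) * (r-s) = x*r^(k+2) - x*s^(k+2)) ∧
      (B (2*k) * (r-s) = (x+1-s)*r^k + (r-x-1)*s^k ∧
       B (2*k+2) * (r-s) = (x+1-s)*r^(k+1) + (r-x-1)*s^(k+1)) := by
    intro k
    induction k with
    | zero =>
      refine ⟨⟨?_, ?_⟩, ?_, ?_⟩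
      · rw [hA0]; ring
      · show A 2 * (r-s) = x*r^2 - x*s^2
        rw [hA2]; linear_combination (-(x)*(r-s)) * hsum
      · rw [hB0]; ring
      · show B 2 * (r-s) = (x+1-s)*r^1 + (r-x-1)*s^1
        rw [hB2]; ring
    | succ k ih =>
      obtain ⟨⟨h1, h2⟩, h3, h4⟩ := ih
      refine ⟨⟨?_, ?_⟩, ?_, ?_⟩
      · rw [show 2*(k+1) = 2*k+2 from by ring]; exact h2
      · rw [show 2*(k+1)+2 = 2*k+4 from by ring, hA (2*k)]
        linear_combination (2*x+1) * h2 - x * h1 - (x*(r^(k+2)-s^(k+2))) * hsum +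
          (x*(r^(k+1)-s^(k+1))) * hrs
      · rw [show 2*(k+1) = 2*k+2 from by ring]; exact h4
      · rw [show 2*(k+1)+2 = 2*k+4 from by ring, hB (2*k)]
        linear_combination (2*x+1) * h4 - x * h3 -
          ((x+1-s)*r^(k+1) + (r-x-1)*s^(k+1)) * hsum +
          ((x+1-s)*r^k + (r-x-1)*s^k) * hrs
  have hrsne : r - s ≠ 0 := by linarith
  have hABk : ∀ k : ℕ, A (2*k) / B (2*k) =
      (x*r - x*s*(s/r)^k) / ((x+1-s) + (r-x-1)*(s/r)^k) := by
    intro k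
    have h1 := (key k).1.1
    have h2 := (key k).2.1
    have hrk : (0:ℝ) < r^k := pow_pos hrpos k
    have hsk : (0:ℝ) < s^k := pow_pos hspos k
    have hDpos : 0 < (x+1-s)*r^k + (r-x-1)*s^k :=
      add_pos (mul_pos (by linarith) hrk) (mul_pos (by linarith) hsk)
    have hBpos : 0 < B (2*k) := by
      have : B (2*k) = ((x+1-s)*r^k + (r-x-1)*s^k) / (r-s) := by
        rw [eq_div_iff hrsne]; exact h2
      rw [this]; exact div_pos hDpos (by linarith)
    have hA' : A (2*k) = (x*r^(k+1) - x*s^(k+1)) / (r-s) := by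
      rw [eq_div_iff hrsne]; exact h1
    have hB' : B (2*k) = ((x+1-s)*r^k + (r-x-1)*s^k) / (r-s) := by
      rw [eq_div_iff hrsne]; exact h2
    rw [hA', hB', div_pow]
    rw [div_div_div_eq, mul_comm (x*r^(k+1) - x*s^(k+1)) (r-s),
      mul_div_mul_left _ _ hrsne]
    rw [div_eq_div_iff hDpos.ne' ?hpos]
    case hpos =>
      have h5 : (0:ℝ) < s^k/r^k := div_pos hsk hrk
      have : (0:ℝ) < (x+1-s) + (r-x-1)*(s^k/r^k) :=
        add_pos (by linarith) (mul_pos (by linarith) h5)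
      exact this.ne'
    field_simp [hrk.ne']
    ring
  have hq0 : (0:ℝ) ≤ s/r := by positivity
  have hq1 : s/r < 1 := (div_lt_one hrpos).2 hsltr
  have hq : Filter.Tendsto (fun k : ℕ => (s/r)^k) Filter.atTop (nhds 0) :=
    tendsto_pow_atTop_nhds_zero_of_lt_one hq0 hq1
  have hnum : Filter.Tendsto (fun k : ℕ => x*r - x*s*(s/r)^k) Filter.atTop
      (nhds (x*r - x*s*0)) := tendsto_const_nhds.sub (tendsto_const_nhds.mul hq)
  have hden : Filter.Tendsto (fun k : ℕ => (x+1-s) + (r-x-1)*(s/r)^k) Filter.atTop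
      (nhds ((x+1-s) + (r-x-1)*0)) := tendsto_const_nhds.add (tendsto_const_nhds.mul hq)
  have hdenne : (x+1-s) + (r-x-1)*0 ≠ 0 := by
    simp only [mul_zero, add_zero]; linarith
  have hlim := hnum.div hden hdenne
  have hzval : (x*r - x*s*0) / ((x+1-s) + (r-x-1)*0) = (2*x-1+d)/2 := by
    simp only [mul_zero, add_zero, sub_zero]
    have hdr : d = 2*r - (2*x+1) := by rw [hrdef]; ring
    rw [div_eq_div_iff (by linarith : x+1-s ≠ 0) (by norm_num : (2:ℝ) ≠ 0), hdr]
    linear_combination 2*hrs - 2*hsum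
  refine ⟨?_, ?_, ?_⟩
  · rw [← hzval]
    exact Filter.Tendsto.congr (fun k => (hABk k).symm) hlim
  · linear_combination (1/4 : ℝ) * hd2
  · have : 0 < 2*x-1+d := by linarith
    linarith
end

section
/- For all real numbers x and s the following relations hold: A (2j+1) = (s+1)·A (2j) − A (2j−2) for all j ≥ 1; x·B (2j+1) = s·A (2j) for all j ≥ 0; s·B (2j) = B (2j+1) − x·B (2j−1) for all j ≥ 1; and x·B (2j) = A (2j) − x·A (2j−2) for all j ≥ 1. -/
private lemma two_step (P : ℕ → Prop) (h0 : P 0) (h1 : P 1)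
    (hstep : ∀ k, P k → P (k + 1) → P (k + 2)) : ∀ k, P k := by
  intro k
  induction k using Nat.strong_induction_on with
  | _ k ih =>
    match k with
    | 0 => exact h0
    | 1 => exact h1
    | (n + 2) => exact hstep n (ih n (by omega)) (ih (n + 1) (by omega))

theorem stmt_16 (x s : ℝ) (A B : ℕ → ℝ)
    (hA0 : A 0 = x) (hA1 : A 1 = x * (s + 1))
    (hA2 : A 2 = x * ((s + 1) * x + 1)) (hA3 : A 3 = x * ((s + 1) ^ 2 * x + s))
    (hB0 : B 0 = 1) (hB1 : B 1 = s)
    (hB2 : B 2 = s * x + 1) (hB3 : B 3 = s * ((s + 1) * x + 1))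
    (hA : ∀ j, A (j + 4) = ((s + 1) * x + 1) * A (j + 2) - x * A j)
    (hB : ∀ j, B (j + 4) = ((s + 1) * x + 1) * B (j + 2) - x * B j) :
    (∀ j, 1 ≤ j → A (2 * j + 1) = (s + 1) * A (2 * j) - A (2 * j - 2)) ∧
    (∀ j, x * B (2 * j + 1) = s * A (2 * j)) ∧
    (∀ j, 1 ≤ j → s * B (2 * j) = B (2 * j + 1) - x * B (2 * j - 1)) ∧
    (∀ j, 1 ≤ j → x * B (2 * j) = A (2 * j) - x * A (2 * j - 2)) := by
  have hA4 : A 4 = ((s + 1) * x + 1) * A 2 - x * A 0 := hA 0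
  have hA5 : A 5 = ((s + 1) * x + 1) * A 3 - x * A 1 := hA 1
  have hB4 : B 4 = ((s + 1) * x + 1) * B 2 - x * B 0 := hB 0
  have hB5 : B 5 = ((s + 1) * x + 1) * B 3 - x * B 1 := hB 1
  have L1 : ∀ k, A (2 * k + 3) = (s + 1) * A (2 * k + 2) - A (2 * k) := by
    apply two_step
    · simpa using by rw [hA3, hA2, hA0]; ring
    · simpa using by rw [hA5, hA4, hA3, hA2, hA1, hA0]; ring
    · intro k h0 h1
      rw [show 2 * (k + 1) + 3 = 2 * k + 5 from by omega,
          show 2 * (k + 1) + 2 = 2 * k + 4 from by omega,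
          show 2 * (k + 1) = 2 * k + 2 from by omega] at h1
      have r1 := hA (2 * k + 3)
      rw [show 2 * k + 3 + 4 = 2 * k + 7 from by omega,
          show 2 * k + 3 + 2 = 2 * k + 5 from by omega] at r1
      have r2 := hA (2 * k + 2)
      rw [show 2 * k + 2 + 4 = 2 * k + 6 from by omega,
          show 2 * k + 2 + 2 = 2 * k + 4 from by omega] at r2
      have r3 := hA (2 * k)
      rw [show 2 * (k + 2) + 3 = 2 * k + 7 from by omega,
          show 2 * (k + 2) + 2 = 2 * k + 6 from by omega,
          show 2 * (k + 2) = 2 * k + 4 from by omega]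
      linear_combination r1 + ((s + 1) * x + 1) * h1 - x * h0 - (s + 1) * r2 + r3
  have L2 : ∀ k, x * B (2 * k + 1) = s * A (2 * k) := by
    apply two_step
    · simpa using by rw [hB1, hA0]; ring
    · simpa using by rw [hB3, hA2]; ring
    · intro k h0 h1
      rw [show 2 * (k + 1) + 1 = 2 * k + 3 from by omega,
          show 2 * (k + 1) = 2 * k + 2 from by omega] at h1
      have r1 := hB (2 * k + 3)
      rw [show 2 * k + 3 + 4 = 2 * k + 7 from by omega,
          show 2 * k + 3 + 2 = 2 * k + 5 from by omega] at r1
      have r2 := hA (2 * k + 2)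
      rw [show 2 * k + 2 + 4 = 2 * k + 6 from by omega,
          show 2 * k + 2 + 2 = 2 * k + 4 from by omega] at r2
      rw [show 2 * (k + 2) + 1 = 2 * k + 5 from by omega,
          show 2 * (k + 2) = 2 * k + 4 from by omega]
      -- goal: x * B (2k+5) = s * A (2k+4); use h1 : x*B(2k+3)=s*A(2k+2), h0, and hB(2k+1), hA(2k)
      have r3 := hB (2 * k + 1)
      rw [show 2 * k + 1 + 4 = 2 * k + 5 from by omega,
          show 2 * k + 1 + 2 = 2 * k + 3 from by omega] at r3
      have r4 := hA (2 * k)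
      linear_combination x * r3 - s * r4 + ((s + 1) * x + 1) * h1 - x * h0
  have L3 : ∀ k, s * B (2 * k + 2) = B (2 * k + 3) - x * B (2 * k + 1) := by
    apply two_step
    · simpa using by rw [hB2, hB3, hB1]; ring
    · simpa using by rw [hB4, hB5, hB3, hB2, hB1, hB0]; ring
    · intro k h0 h1
      rw [show 2 * (k + 1) + 2 = 2 * k + 4 from by omega,
          show 2 * (k + 1) + 3 = 2 * k + 5 from by omega,
          show 2 * (k + 1) + 1 = 2 * k + 3 from by omega] at h1
      have r1 := hB (2 * k + 2)
      rw [show 2 * k + 2 + 4 = 2 * k + 6 from by omega,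
          show 2 * k + 2 + 2 = 2 * k + 4 from by omega] at r1
      have r2 := hB (2 * k + 3)
      rw [show 2 * k + 3 + 4 = 2 * k + 7 from by omega,
          show 2 * k + 3 + 2 = 2 * k + 5 from by omega] at r2
      have r3 := hB (2 * k + 1)
      rw [show 2 * k + 1 + 4 = 2 * k + 5 from by omega,
          show 2 * k + 1 + 2 = 2 * k + 3 from by omega] at r3
      rw [show 2 * (k + 2) + 2 = 2 * k + 6 from by omega,
          show 2 * (k + 2) + 3 = 2 * k + 7 from by omega,
          show 2 * (k + 2) + 1 = 2 * k + 5 from by omega]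
      linear_combination s * r1 - r2 + x * r3 + ((s + 1) * x + 1) * h1 - x * h0
  have L4 : ∀ k, x * B (2 * k + 2) = A (2 * k + 2) - x * A (2 * k) := by
    apply two_step
    · simpa using by rw [hB2, hA2, hA0]; ring
    · simpa using by rw [hB4, hA4, hB2, hA2, hB0, hA0]; ring
    · intro k h0 h1
      rw [show 2 * (k + 1) + 2 = 2 * k + 4 from by omega,
          show 2 * (k + 1) = 2 * k + 2 from by omega] at h1
      have r1 := hB (2 * k + 2)
      rw [show 2 * k + 2 + 4 = 2 * k + 6 from by omega,
          show 2 * k + 2 + 2 = 2 * k + 4 from by omega] at r1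
      have r2 := hA (2 * k + 2)
      rw [show 2 * k + 2 + 4 = 2 * k + 6 from by omega,
          show 2 * k + 2 + 2 = 2 * k + 4 from by omega] at r2
      have r3 := hA (2 * k)
      rw [show 2 * (k + 2) + 2 = 2 * k + 6 from by omega,
          show 2 * (k + 2) = 2 * k + 4 from by omega]
      linear_combination x * r1 - r2 + x * r3 + ((s + 1) * x + 1) * h1 - x * h0
  refine ⟨?_, L2, ?_, ?_⟩
  · intro j hj
    obtain ⟨k, rfl⟩ := Nat.exists_eq_add_of_le hj
    rw [show 2 * (1 + k) + 1 = 2 * k + 3 from by omega,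
        show 2 * (1 + k) - 2 = 2 * k from by omega,
        show 2 * (1 + k) = 2 * k + 2 from by omega]
    exact L1 k
  · intro j hj
    obtain ⟨k, rfl⟩ := Nat.exists_eq_add_of_le hj
    rw [show 2 * (1 + k) + 1 = 2 * k + 3 from by omega,
        show 2 * (1 + k) - 1 = 2 * k + 1 from by omega,
        show 2 * (1 + k) = 2 * k + 2 from by omega]
    exact L3 k
  · intro j hj
    obtain ⟨k, rfl⟩ := Nat.exists_eq_add_of_le hj
    rw [show 2 * (1 + k) - 2 = 2 * k from by omega,
        show 2 * (1 + k) = 2 * k + 2 from by omega]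
    exact L4 k
end

section
/- For all real numbers x and s: for every j ≥ 0, s·A (2j)² − ((s+1)x−1)·A (2j)·B (2j) − x·B (2j)² = −x^(j+2), and for every j ≥ 1, s·A (2j−1)² − ((s+1)x−1)·A (2j−1)·B (2j−1) − x·B (2j−1)² = s·x^j. -/
theorem stmt_17 (x s : ℝ) (A B : ℕ → ℝ)
    (hA0 : A 0 = x) (hA1 : A 1 = x * (s + 1))
    (hA2 : A 2 = x * ((s + 1) * x + 1)) (hA3 : A 3 = x * ((s + 1) ^ 2 * x + s))
    (hB0 : B 0 = 1) (hB1 : B 1 = s)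
    (hB2 : B 2 = s * x + 1) (hB3 : B 3 = s * ((s + 1) * x + 1))
    (hA : ∀ j, A (j + 4) = ((s + 1) * x + 1) * A (j + 2) - x * A j)
    (hB : ∀ j, B (j + 4) = ((s + 1) * x + 1) * B (j + 2) - x * B j) :
    (∀ j, s * A (2 * j) ^ 2 - ((s + 1) * x - 1) * A (2 * j) * B (2 * j)
        - x * B (2 * j) ^ 2 = -x ^ (j + 2)) ∧
    (∀ j, 1 ≤ j → s * A (2 * j - 1) ^ 2
        - ((s + 1) * x - 1) * A (2 * j - 1) * B (2 * j - 1)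
        - x * B (2 * j - 1) ^ 2 = s * x ^ j) := by
  set Q : ℕ → ℝ := fun n =>
    s * A n ^ 2 - ((s + 1) * x - 1) * A n * B n - x * B n ^ 2 with hQ
  set P : ℕ → ℝ := fun n =>
    2 * s * A (n + 2) * A n
      - ((s + 1) * x - 1) * (A (n + 2) * B n + A n * B (n + 2))
      - 2 * x * B (n + 2) * B n with hP
  have aux : ∀ j, Q (2 * j) = -x ^ (j + 2) ∧ Q (2 * j + 1) = s * x ^ (j + 1)
      ∧ Q (2 * j + 2) = -x ^ (j + 3) ∧ Q (2 * j + 3) = s * x ^ (j + 2)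
      ∧ P (2 * j) = ((s + 1) * x + 1) * (-x ^ (j + 2))
      ∧ P (2 * j + 1) = ((s + 1) * x + 1) * (s * x ^ (j + 1)) := by
    intro j
    induction j with
    | zero =>
      simp only [hQ, hP]
      norm_num [hA0, hA1, hA2, hA3, hB0, hB1, hB2, hB3]
      refine ⟨by ring, by ring, by ring, by ring, by ring, by ring⟩
    | succ j ih =>
      obtain ⟨h0, h1, h2, h3, p0, p1⟩ := ih
      simp only [hQ, hP] at h0 h1 h2 h3 p0 p1 ⊢
      simp only [show 2 * (j + 1) = 2 * j + 2 from by ring,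
        show 2 * j + 2 + 1 = 2 * j + 3 from by ring,
        show 2 * j + 2 + 2 = 2 * j + 4 from by ring,
        show 2 * j + 2 + 3 = 2 * j + 1 + 4 from by ring,
        show 2 * j + 3 + 2 = 2 * j + 1 + 4 from by ring,
        show 2 * j + 4 + 2 = 2 * j + 2 + 4 from by ring]
      refine ⟨by linear_combination h2, by linear_combination h3, ?_, ?_, ?_, ?_⟩
      · rw [hA (2 * j), hB (2 * j)]
        linear_combination ((s + 1) * x + 1) ^ 2 * h2 + x ^ 2 * h0
          - ((s + 1) * x + 1) * x * p0
      · rw [hA (2 * j + 1), hB (2 * j + 1)]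
        linear_combination ((s + 1) * x + 1) ^ 2 * h3 + x ^ 2 * h1
          - ((s + 1) * x + 1) * x * p1
      · rw [hA (2 * j), hB (2 * j)]
        linear_combination 2 * ((s + 1) * x + 1) * h2 - x * p0
      · rw [hA (2 * j + 1), hB (2 * j + 1)]
        linear_combination 2 * ((s + 1) * x + 1) * h3 - x * p1
  constructor
  · intro j
    have := (aux j).1
    simpa [hQ] using this
  · intro j hj
    obtain ⟨k, rfl⟩ := Nat.exists_eq_add_of_le hj
    have e : 2 * (1 + k) - 1 = 2 * k + 1 := by omega
    rw [e]
    have := (aux k).2.1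
    simp only [hQ] at this
    linear_combination this
end

section
/- Let x and s be positive integers, regarded as real numbers. Then the sequence of convergents k ↦ A k / B k of F(x,s) converges (as k → ∞) to (((s+1)x − 1) + √(((s+1)x − 1)² + 4sx))/(2s), the positive root of the quadratic P(x,z,s) = s·z² − ((s+1)x − 1)·z − x. -/
open Filter

private lemma evenOddTendsto {f : ℕ → ℝ} {L : ℝ}
    (he : Tendsto (fun k => f (2 * k)) atTop (nhds L))
    (ho : Tendsto (fun k => f (2 * k + 1)) atTop (nhds L)) :
    Tendsto f atTop (nhds L) := by
  rw [Metric.tendsto_atTop] at he ho ⊢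
  intro ε hε
  obtain ⟨N1, h1⟩ := he ε hε
  obtain ⟨N2, h2⟩ := ho ε hε
  refine ⟨2 * max N1 N2 + 2, fun n hn => ?_⟩
  rcases Nat.even_or_odd n with ⟨k, hk⟩ | ⟨k, hk⟩
  · have hnk : n = 2 * k := by omega
    rw [hnk]; exact h1 k (by omega)
  · have hnk : n = 2 * k + 1 := by omega
    rw [hnk]; exact h2 k (by omega)

private lemma divHelper (a b z : ℝ) (hz : z ≠ 0) : (a * z) / (b * z) = a / b := by
  rcases eq_or_ne b 0 with hb | hb
  · simp [hb]
  · field_simp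

set_option maxHeartbeats 1600000 in
theorem stmt_19 (m n : ℕ) (hm : 0 < m) (hn : 0 < n)
    (x s : ℝ) (hxm : x = (m : ℝ)) (hsn : s = (n : ℝ)) (A B : ℕ → ℝ)
    (hA0 : A 0 = x) (hA1 : A 1 = x * (s + 1))
    (hA2 : A 2 = x * ((s + 1) * x + 1)) (hA3 : A 3 = x * ((s + 1) ^ 2 * x + s))
    (hB0 : B 0 = 1) (hB1 : B 1 = s)
    (hB2 : B 2 = s * x + 1) (hB3 : B 3 = s * ((s + 1) * x + 1))
    (hA : ∀ j, A (j + 4) = ((s + 1) * x + 1) * A (j + 2) - x * A j)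
    (hB : ∀ j, B (j + 4) = ((s + 1) * x + 1) * B (j + 2) - x * B j) :
    Filter.Tendsto (fun k => A k / B k) Filter.atTop
      (nhds ((((s + 1) * x - 1) + Real.sqrt (((s + 1) * x - 1) ^ 2 + 4 * s * x))
        / (2 * s))) ∧
    s * ((((s + 1) * x - 1) + Real.sqrt (((s + 1) * x - 1) ^ 2 + 4 * s * x))
        / (2 * s)) ^ 2
      - ((s + 1) * x - 1) *
        ((((s + 1) * x - 1) + Real.sqrt (((s + 1) * x - 1) ^ 2 + 4 * s * x))
          / (2 * s))
      - x = 0 ∧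
    0 < (((s + 1) * x - 1) + Real.sqrt (((s + 1) * x - 1) ^ 2 + 4 * s * x))
        / (2 * s) := by
  have hx1 : (1 : ℝ) ≤ x := by rw [hxm]; exact_mod_cast hm
  have hs1 : (1 : ℝ) ≤ s := by rw [hsn]; exact_mod_cast hn
  have hx0 : (0 : ℝ) < x := by linarith
  have hs0 : (0 : ℝ) < s := by linarith
  have hDpos : (0 : ℝ) < ((s + 1) * x - 1) ^ 2 + 4 * s * x := by
    nlinarith [sq_nonneg ((s + 1) * x - 1), mul_pos hs0 hx0]
  set d := Real.sqrt (((s + 1) * x - 1) ^ 2 + 4 * s * x) with hdd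
  have hd0 : 0 < d := Real.sqrt_pos.mpr hDpos
  have hd2 : d ^ 2 = ((s + 1) * x - 1) ^ 2 + 4 * s * x := Real.sq_sqrt hDpos.le
  set t := ((s + 1) * x + 1 + d) / 2 with htdef
  set u := ((s + 1) * x + 1 - d) / 2 with hudef
  have htpu : t + u = (s + 1) * x + 1 := by rw [htdef, hudef]; ring
  have htmu : t - u = d := by rw [htdef, hudef]; ring
  have htu : t * u = x := by rw [htdef, hudef]; linear_combination (-(1 : ℝ) / 4) * hd2
  have ht2 : t ^ 2 = ((s + 1) * x + 1) * t - x := by linear_combination t * htpu - htu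
  have hu2 : u ^ 2 = ((s + 1) * x + 1) * u - x := by linear_combination u * htpu - htu
  have ht0 : 0 < t := by rw [htdef]; nlinarith [hd0, hx1, hs1]
  have hu0 : 0 < u := by
    have hmul : 0 < t * u := by rw [htu]; exact hx0
    rcases mul_pos_iff.mp hmul with h | h
    · exact h.2
    · linarith [h.1, ht0]
  have hut : u < t := by rw [htdef, hudef]; linarith [hd0]
  clear_value u t d
  have hr0 : (0 : ℝ) ≤ u / t := le_of_lt (div_pos hu0 ht0)
  have hr1 : u / t < 1 := (div_lt_one ht0).mpr hut
  have hrlim : Tendsto (fun i => (u / t) ^ i) atTop (nhds 0) :=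
    tendsto_pow_atTop_nhds_zero_of_lt_one hr0 hr1
  have hsxu : 0 < s * x + 1 - u := by
    have hsx : 0 ≤ s * x - x := by
      nlinarith [mul_nonneg (by linarith : (0:ℝ) ≤ s - 1) hx0.le]
    rw [hudef]; linarith [hd0]
  have hL : (((s + 1) * x - 1) + d) / (2 * s) = (t - 1) / s := by
    rw [htdef]; field_simp; ring
  -- closed forms, multiplied by d
  have key : ∀ i,
      (A (2 * i) * d = x * t * t ^ i - x * u * u ^ i) ∧
      (A (2 * i + 1) * d = x * ((s + 1) * t - 1) * t ^ i + x * (1 - (s + 1) * u) * u ^ i) ∧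
      (B (2 * i) * d = (s * x + 1 - u) * t ^ i + (t - (s * x + 1)) * u ^ i) ∧
      (B (2 * i + 1) * d = s * t * t ^ i - s * u * u ^ i) := by
    intro i
    induction i using Nat.twoStepInduction with
    | zero =>
      refine ⟨?_, ?_, ?_, ?_⟩ <;>
        simp only [Nat.mul_zero, Nat.zero_add, pow_zero, hA0, hA1, hB0, hB1] <;>
        (rw [htdef, hudef]; ring)
    | one =>
      refine ⟨?_, ?_, ?_, ?_⟩ <;>
        simp only [show 2 * 1 = 2 from rfl, show 2 * 1 + 1 = 3 from rfl, pow_one,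
          hA2, hA3, hB2, hB3] <;>
        (rw [htdef, hudef]; ring)
    | more i ih1 ih2 =>
      obtain ⟨a1, a2, a3, a4⟩ := ih1
      obtain ⟨b1, b2, b3, b4⟩ := ih2
      have e1 : 2 * (i + 2) = 2 * i + 4 := by ring
      have e2 : 2 * (i + 2) + 1 = (2 * i + 1) + 4 := by ring
      have e3 : 2 * (i + 1) = 2 * i + 2 := by ring
      have e4 : 2 * (i + 1) + 1 = (2 * i + 1) + 2 := by ring
      rw [e3] at b1 b3; rw [e4] at b2 b4
      refine ⟨?_, ?_, ?_, ?_⟩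
      · rw [e1, hA (2 * i)]
        linear_combination ((s + 1) * x + 1) * b1 - x * a1 - x * t * t ^ i * ht2
          + x * u * u ^ i * hu2
      · rw [e2, hA (2 * i + 1)]
        linear_combination ((s + 1) * x + 1) * b2 - x * a2
          - x * ((s + 1) * t - 1) * t ^ i * ht2 - x * (1 - (s + 1) * u) * u ^ i * hu2
      · rw [e1, hB (2 * i)]
        linear_combination ((s + 1) * x + 1) * b3 - x * a3
          - (s * x + 1 - u) * t ^ i * ht2 - (t - (s * x + 1)) * u ^ i * hu2
      · rw [e2, hB (2 * i + 1)]
        linear_combination ((s + 1) * x + 1) * b4 - x * a4 - s * t * t ^ i * ht2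
          + s * u * u ^ i * hu2
  have hd_ne : d ≠ 0 := ne_of_gt hd0
  have htine : ∀ i : ℕ, (t : ℝ) ^ i ≠ 0 := fun i => ne_of_gt (pow_pos ht0 i)
  -- even subsequence
  have heq_even : ∀ i, A (2 * i) / B (2 * i) =
      (x * t - x * u * (u / t) ^ i) / ((s * x + 1 - u) + (t - (s * x + 1)) * (u / t) ^ i) := by
    intro i
    have h1 := (key i).1
    have h3 := (key i).2.2.1
    have hnum : x * t - x * u * (u / t) ^ i = A (2 * i) * (d / t ^ i) := by
      rw [show A (2 * i) * (d / t ^ i) = (A (2 * i) * d) / t ^ i by ring, h1,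
        div_pow]
      field_simp
    have hden : (s * x + 1 - u) + (t - (s * x + 1)) * (u / t) ^ i = B (2 * i) * (d / t ^ i) := by
      rw [show B (2 * i) * (d / t ^ i) = (B (2 * i) * d) / t ^ i by ring, h3,
        div_pow]
      field_simp
    rw [hnum, hden, divHelper _ _ _ (div_ne_zero hd_ne (htine i))]
  have heq_odd : ∀ i, A (2 * i + 1) / B (2 * i + 1) =
      (x * ((s + 1) * t - 1) + x * (1 - (s + 1) * u) * (u / t) ^ i)
        / (s * t - s * u * (u / t) ^ i) := by
    intro i
    have h2 := (key i).2.1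
    have h4 := (key i).2.2.2
    have hnum : x * ((s + 1) * t - 1) + x * (1 - (s + 1) * u) * (u / t) ^ i
        = A (2 * i + 1) * (d / t ^ i) := by
      rw [show A (2 * i + 1) * (d / t ^ i) = (A (2 * i + 1) * d) / t ^ i by ring, h2,
        div_pow]
      field_simp
    have hden : s * t - s * u * (u / t) ^ i = B (2 * i + 1) * (d / t ^ i) := by
      rw [show B (2 * i + 1) * (d / t ^ i) = (B (2 * i + 1) * d) / t ^ i by ring, h4,
        div_pow]
      field_simp
    rw [hnum, hden, divHelper _ _ _ (div_ne_zero hd_ne (htine i))]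
  have heven_lim : x * t / (s * x + 1 - u) = (t - 1) / s := by
    rw [div_eq_div_iff (ne_of_gt hsxu) (ne_of_gt hs0)]
    linear_combination htu - htpu
  have hodd_lim : x * ((s + 1) * t - 1) / (s * t) = (t - 1) / s := by
    rw [div_eq_div_iff (ne_of_gt (mul_pos hs0 ht0)) (ne_of_gt hs0)]
    linear_combination (-s) * ht2
  have heven : Tendsto (fun i => A (2 * i) / B (2 * i)) atTop (nhds ((t - 1) / s)) := by
    have hnum : Tendsto (fun i => x * t - x * u * (u / t) ^ i) atTop (nhds (x * t)) := by
      have := hrlim.const_mul (x * u)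
      simpa using tendsto_const_nhds.sub this
    have hden : Tendsto (fun i => (s * x + 1 - u) + (t - (s * x + 1)) * (u / t) ^ i)
        atTop (nhds (s * x + 1 - u)) := by
      have := hrlim.const_mul (t - (s * x + 1))
      simpa using tendsto_const_nhds.add this
    have := hnum.div hden (ne_of_gt hsxu)
    rw [heven_lim] at this
    exact this.congr (fun i => (heq_even i).symm)
  have hodd : Tendsto (fun i => A (2 * i + 1) / B (2 * i + 1)) atTop (nhds ((t - 1) / s)) := by
    have hnum : Tendsto (fun i => x * ((s + 1) * t - 1) + x * (1 - (s + 1) * u) * (u / t) ^ i)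
        atTop (nhds (x * ((s + 1) * t - 1))) := by
      have := hrlim.const_mul (x * (1 - (s + 1) * u))
      simpa using tendsto_const_nhds.add this
    have hden : Tendsto (fun i => s * t - s * u * (u / t) ^ i) atTop (nhds (s * t)) := by
      have := hrlim.const_mul (s * u)
      simpa using tendsto_const_nhds.sub this
    have := hnum.div hden (ne_of_gt (mul_pos hs0 ht0))
    rw [hodd_lim] at this
    exact this.congr (fun i => (heq_odd i).symm)
  refine ⟨?_, ?_, ?_⟩
  · rw [hL]
    exact evenOddTendsto heven hodd
  · field_simp
    linear_combination hd2
  · apply div_pos _ (by linarith)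
    nlinarith [hd2, hd0, mul_pos hs0 hx0]
end
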